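/- Let K be a field of characteristic ≠ 2 and A ∈ K. For all t, y ∈ K with t⁴ ≠ 1 and y² = A(t+1)⁴(t²+1)⁴ - 64t³(t²+t+1)³, setting u = -t(t³-1)/(t⁴-1) and v = y/(8(t+1)²(t²+1)²), we have v² = u⁴ + u³ + A/64. -/

import Mathlib

/-- Second covering map `f₂`: for a field `K` of characteristic ≠ 2, `A ∈ K`, and all
`t, y ∈ K` with `t⁴ ≠ 1` and `y² = A(t+1)⁴(t²+1)⁴ - 64t³(t²+t+1)³`, setting
`u = -t(t³-1)/(t⁴-1)` and `v = y/(8(t+1)²(t²+1)²)`, one has `v² = u⁴ + u³ + A/64`. -/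
theorem stmt_7 {K : Type*} [Field K] (h2 : (2 : K) ≠ 0) (A : K) :
    ∀ t y : K, t ^ 4 ≠ 1 →
      y ^ 2 = A * (t + 1) ^ 4 * (t ^ 2 + 1) ^ 4 - 64 * t ^ 3 * (t ^ 2 + t + 1) ^ 3 →
      (y / (8 * (t + 1) ^ 2 * (t ^ 2 + 1) ^ 2)) ^ 2
        = (-t * (t ^ 3 - 1) / (t ^ 4 - 1)) ^ 4 + (-t * (t ^ 3 - 1) / (t ^ 4 - 1)) ^ 3
          + A / 64 := by
  intro t y ht hy
  have h4 : t ^ 4 - 1 ≠ 0 := sub_ne_zero.mpr ht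
  have h1 : t + 1 ≠ 0 := fun h => h4 (by rw [show t = -1 from by linear_combination h]; ring)
  have hm1 : t - 1 ≠ 0 := fun h => h4 (by rw [show t = 1 from by linear_combination h]; ring)
  have hsq : t ^ 2 + 1 ≠ 0 := fun h => h4 (by linear_combination (t^2 - 1) * h)
  have h8 : (8 : K) ≠ 0 := by
    have : (8 : K) = 2 ^ 3 := by norm_num
    rw [this]; exact pow_ne_zero _ h2
  have h64 : (64 : K) ≠ 0 := by
    have : (64 : K) = 2 ^ 6 := by norm_num
    rw [this]; exact pow_ne_zero _ h2
  have hu : -t * (t ^ 3 - 1) / (t ^ 4 - 1)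
      = -t * (t ^ 2 + t + 1) / ((t + 1) * (t ^ 2 + 1)) := by
    rw [div_eq_div_iff h4 (mul_ne_zero h1 hsq)]
    ring
  rw [hu]
  field_simp
  linear_combination 64 * hy
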